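/- For every integer n ≥ 1 and every word u of length n−1 over the alphabet {a,b}, the number of Catalan tableaux of index n whose profile is u equals the number of binary trees with n vertices whose canopy is u. -/

import Mathlib

/-- A binary tree: empty, or a root with a left and a right subtree. -/
inductive BinTree : Type
  | nil : BinTree
  | node : BinTree → BinTree → BinTree
  deriving DecidableEq

/-- Number of vertices of a binary tree. -/
def BinTree.size : BinTree → ℕ
  | .nil => 0
  | .node l r => l.size + r.size + 1

/-- Length (number of vertices) of the left branch. -/
def BinTree.leftBranchLen : BinTree → ℕ
  | .nil => 0
  | .node l _ => l.leftBranchLen + 1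

/-- Length (number of vertices) of the right branch. -/
def BinTree.rightBranchLen : BinTree → ℕ
  | .nil => 0
  | .node _ r => r.rightBranchLen + 1

/-- Word over {a,b} (a = `true`, b = `false`) reading the vertices in symmetric
(in-)order; a vertex contributes `true` iff it has a right child. -/
def BinTree.canopyFull : BinTree → List Bool
  | .nil => []
  | .node l r => l.canopyFull ++ (decide (r ≠ BinTree.nil)) :: r.canopyFull

/-- The canopy of a binary tree with `n` vertices: the word `u₁ … u_{n-1}` over
{a = `true`, b = `false`} with `uᵢ = a` iff the `i`-th vertex in symmetric order
has a right child.  (The last vertex in symmetric order never has a right child,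
so it is dropped.) -/
def BinTree.canopy (B : BinTree) : List Bool := B.canopyFull.dropLast

/-- A Catalan tableau of index `n`: a partition `λ₁ ≥ … ≥ λ_k` with `λ₁ = n - k`,
drawn right-justified inside the `k × (n-k)` rectangle (rows bottom to top, row `i`
having `lam i` cells, occupying columns `j` with `m - lam i ≤ j < m` where
`m = n - k`), filled with 0's (`false`) and 1's (`true`) such that every column
contains exactly one 1 and no 0 has both a 1 below it in its column and a 1 to
its right in its row.  Entries outside the diagram are forced to `false`. -/
structure CatalanTableau (n : ℕ) where
  k : ℕ
  m : ℕ
  hk : 0 < k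
  hkm : k + m = n
  lam : Fin k → ℕ
  lam_le : ∀ i, lam i ≤ m
  lam_first : lam ⟨0, hk⟩ = m
  lam_anti : ∀ i j : Fin k, i ≤ j → lam j ≤ lam i
  f : Fin k → Fin m → Bool
  f_outside : ∀ (i : Fin k) (j : Fin m), (j : ℕ) < m - lam i → f i j = false
  col_one : ∀ j : Fin m, ∃! i : Fin k, f i j = true
  no_bad : ∀ (i : Fin k) (j : Fin m), m - lam i ≤ (j : ℕ) → f i j = false →
    ¬ ((∃ i' : Fin k, i' < i ∧ f i' j = true) ∧
       (∃ j' : Fin m, (j : ℕ) < (j' : ℕ) ∧ f i j' = true))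

/-- The profile of a Catalan tableau: the NW border of its Ferrers diagram read
from the bottom-left corner of the rectangle to its top-right corner
(a = `true` for a north step, b = `false` for an east step), with the first
letter (always a north step) deleted. -/
def CatalanTableau.profile {n : ℕ} (T : CatalanTableau n) : List Bool :=
  ((List.finRange T.k).flatMap (fun i =>
    true :: List.replicate
      (T.lam i - (if h : (i : ℕ) + 1 < T.k then T.lam ⟨(i : ℕ) + 1, h⟩ else 0)) false)).tail

/-- Number of 1's in the first (bottom) row of a Catalan tableau. -/
noncomputable def CatalanTableau.onesFirstRow {n : ℕ} (T : CatalanTableau n) : ℕ :=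
  Nat.card {j : Fin T.m // T.f ⟨0, T.hk⟩ j = true}

/-- An entry is restricted if it is a 0 (in a cell of the diagram) lying above
some 1 in its column. -/
def CatalanTableau.Restricted {n : ℕ} (T : CatalanTableau n)
    (i : Fin T.k) (j : Fin T.m) : Prop :=
  T.m - T.lam i ≤ (j : ℕ) ∧ T.f i j = false ∧ ∃ i' : Fin T.k, i' < i ∧ T.f i' j = true

/-- Number of unrestricted rows (rows of the rectangle containing no restricted
entry). -/
noncomputable def CatalanTableau.unrestrictedRows {n : ℕ} (T : CatalanTableau n) : ℕ :=
  Nat.card {i : Fin T.k // ∀ j : Fin T.m, ¬ T.Restricted i j}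

/-- `weaklyBelow ω η`: the lattice paths coded by `ω`, `η` (a = `true` = north
step, b = `false` = east step, both starting at the origin) have the same
endpoints and `η` never passes strictly above `ω`. -/
def weaklyBelow (ω η : List Bool) : Prop :=
  η.length = ω.length ∧ η.count true = ω.count true ∧
    ∀ t : ℕ, (η.take t).count true ≤ (ω.take t).count true

/-- Heights at which the successive east steps of a path occur. -/
def eastHeightsAux : ℕ → List Bool → List ℕ
  | _, [] => []
  | h, true :: w => eastHeightsAux (h + 1) w
  | h, false :: w => h :: eastHeightsAux h w

def eastHeights (w : List Bool) : List ℕ := eastHeightsAux 0 w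

/-- Number of horizontal contacts of two paths: unit east edges traversed by
both paths. -/
def contacts (ω η : List Bool) : ℕ :=
  ((eastHeights ω).zip (eastHeights η)).countP (fun p => p.1 == p.2)

/-- Number of trailing north steps of a path. -/
def trailingNorth (w : List Bool) : ℕ := (w.reverse.takeWhile (· == true)).length

/-- Number of left edges, i.e. of vertices having a left child. -/
def BinTree.leftEdgeCount : BinTree → ℕ
  | .nil => 0
  | .node l r => l.leftEdgeCount + r.leftEdgeCount + (if l = BinTree.nil then 0 else 1)

/-- Number of vertices having no right child. -/
def BinTree.noRightCount : BinTree → ℕ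
  | .nil => 0
  | .node l r => l.noRightCount + r.noRightCount + (if r = BinTree.nil then 1 else 0)

/-- Symmetric-order traversal recording, for each vertex, whether it has a left
child, whether it has a right child, and its right height (the second argument
is the right height of the current root). -/
def BinTree.inorderAux : BinTree → ℕ → List (Bool × Bool × ℕ)
  | .nil, _ => []
  | .node l r, h =>
      BinTree.inorderAux l h ++
        (decide (l ≠ BinTree.nil), decide (r ≠ BinTree.nil), h) :: BinTree.inorderAux r (h + 1)

def BinTree.inorder (B : BinTree) : List (Bool × Bool × ℕ) := B.inorderAux 0

/-- The sequence `ρ₁, …, ρ_m`: right heights of the parents of the left edges,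
the left edges being ordered by their parents in symmetric order. -/
def BinTree.rhoList (B : BinTree) : List ℕ :=
  (B.inorder.filter (fun v => v.1)).map (fun v => v.2.2)

def hsAux : List (Bool × Bool × ℕ) → ℕ → List ℕ
  | [], _ => []
  | v :: rest, c => if v.2.1 then hsAux rest (c + 1) else c :: hsAux rest c

/-- The sequence `h₁, …, h_m`: for each vertex with no right child (in symmetric
order, excluding the last vertex in symmetric order), the number of vertices
preceding it in symmetric order that have a right child. -/
def BinTree.hList (B : BinTree) : List ℕ := (hsAux B.inorder 0).dropLast

/-- Leaves of the completion `γ(B)` in symmetric order, each recorded as `true`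
if it is a left child of its parent and `false` if it is a right child; the
boolean argument records whether the current subtree sits as a left child. -/
def BinTree.gammaLeavesAux : BinTree → Bool → List Bool
  | .nil, isLeft => [isLeft]
  | .node l r, _ => BinTree.gammaLeavesAux l true ++ BinTree.gammaLeavesAux r false

/-- The word of the leaves of the complete binary tree `γ(B)` in symmetric order
(a = `true` for a left child, b = `false` for a right child). -/
def BinTree.leafWord : BinTree → List Bool
  | .nil => []
  | .node l r => BinTree.gammaLeavesAux l true ++ BinTree.gammaLeavesAux r false

open BinTree

namespace CTproof

abbrev lbl := BinTree.leftBranchLen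

/-- insert a new leftmost vertex at depth `d` along the left branch -/
def ins : ℕ → BinTree → BinTree
  | 0, t => .node .nil t
  | _ + 1, .nil => .node .nil .nil
  | d + 1, .node l r => .node (ins d l) r

/-- remove the leftmost vertex -/
def rem : BinTree → BinTree
  | .nil => .nil
  | .node .nil r => r
  | .node (.node a b) r => .node (rem (.node a b)) r

lemma lbl_eq_zero {B : BinTree} : lbl B = 0 ↔ B = .nil := by
  cases B <;> simp [lbl, BinTree.leftBranchLen]

lemma cF_eq_nil {B : BinTree} : B.canopyFull = [] ↔ B = .nil := by
  cases B with
  | nil => simp [BinTree.canopyFull]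
  | node l r => simp [BinTree.canopyFull]

lemma ins_ne_nil (d : ℕ) (B : BinTree) : ins d B ≠ .nil := by
  cases d with
  | zero => simp [ins]
  | succ d => cases B <;> simp [ins]

lemma lbl_ins (d : ℕ) (B : BinTree) (hd : d ≤ lbl B) : lbl (ins d B) = d + 1 := by
  induction d generalizing B with
  | zero => simp [ins, lbl, BinTree.leftBranchLen]
  | succ d ih =>
    cases B with
    | nil => simp [lbl, BinTree.leftBranchLen] at hd
    | node l r =>
      simp only [lbl, BinTree.leftBranchLen, Nat.add_le_add_iff_right] at hd ⊢
      simp [ins, BinTree.leftBranchLen, ih l hd]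

lemma cF_ins (d : ℕ) (B : BinTree) (hd : d ≤ lbl B) :
    (ins d B).canopyFull = (decide (d < lbl B)) :: B.canopyFull := by
  induction d generalizing B with
  | zero =>
    simp only [ins, BinTree.canopyFull]
    have : (0 < lbl B) ↔ B ≠ .nil := by
      rw [Nat.pos_iff_ne_zero, not_iff_not, lbl_eq_zero]
    simp [BinTree.canopyFull, decide_eq_decide.2 this.symm]
  | succ d ih =>
    cases B with
    | nil => simp [lbl, BinTree.leftBranchLen] at hd
    | node l r =>
      simp only [lbl, BinTree.leftBranchLen, Nat.add_le_add_iff_right] at hd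
      simp only [ins, BinTree.canopyFull, ih l hd]
      have : (d + 1 < lbl (BinTree.node l r)) ↔ d < lbl l := by
        simp [lbl, BinTree.leftBranchLen]
      rw [decide_eq_decide.2 this]
      rfl

lemma rem_ins (d : ℕ) (B : BinTree) (hd : d ≤ lbl B) : rem (ins d B) = B := by
  induction d generalizing B with
  | zero => simp [ins, rem]
  | succ d ih =>
    cases B with
    | nil => simp [lbl, BinTree.leftBranchLen] at hd
    | node l r =>
      simp only [lbl, BinTree.leftBranchLen, Nat.add_le_add_iff_right] at hd
      have h2 := ins_ne_nil d l
      simp only [ins]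
      cases hins : ins d l with
      | nil => exact absurd hins h2
      | node a b => rw [rem, ← hins, ih l hd]

lemma ins_rem (B : BinTree) (hB : B ≠ .nil) : ins (lbl B - 1) (rem B) = B := by
  induction B with
  | nil => exact absurd rfl hB
  | node l r ihl _ =>
    cases l with
    | nil => simp [lbl, BinTree.leftBranchLen, rem, ins]
    | node a b =>
      have hl : lbl (BinTree.node a b) ≥ 1 := by simp [lbl, BinTree.leftBranchLen]
      have : lbl (BinTree.node (BinTree.node a b) r) - 1 = (lbl (BinTree.node a b) - 1) + 1 := by
        simp only [lbl, BinTree.leftBranchLen] at *; omega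
      rw [rem, this, ins, ihl (by simp)]

lemma lbl_rem_ge (B : BinTree) : lbl B - 1 ≤ lbl (rem B) := by
  induction B with
  | nil => simp [rem]
  | node l r ihl _ =>
    cases l with
    | nil => simp [lbl, BinTree.leftBranchLen]
    | node a b =>
      rw [rem]
      simp only [lbl, BinTree.leftBranchLen] at ihl ⊢
      omega

lemma cF_rem (B : BinTree) (hB : B ≠ .nil) :
    B.canopyFull = (decide (lbl B - 1 < lbl (rem B))) :: (rem B).canopyFull := by
  conv_lhs => rw [← ins_rem B hB]
  rw [cF_ins _ _ (lbl_rem_ge B)]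

/-- Trees with a given canopyFull word. -/
def TreeS (v : List Bool) : Type := {B : BinTree // B.canopyFull = v}


lemma cF_rem' {x : Bool} {v : List Bool} (B : BinTree) (h : B.canopyFull = x :: v) :
    (rem B).canopyFull = v ∧ (decide (lbl B - 1 < lbl (rem B))) = x := by
  have hB : B ≠ .nil := by intro hn; rw [hn] at h; simp [BinTree.canopyFull] at h
  have h2 := cF_rem B hB
  rw [h] at h2
  obtain ⟨h3, h4⟩ := List.cons_eq_cons.mp h2
  exact ⟨h4.symm, h3.symm⟩

/-- east-step-case equivalence -/
def eF (v : List Bool) : TreeS v ≃ TreeS (false :: v) where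
  toFun B := ⟨ins (lbl B.1) B.1, by
    rw [cF_ins _ _ le_rfl, B.2]; simp⟩
  invFun B := ⟨rem B.1, (cF_rem' B.1 B.2).1⟩
  left_inv B := Subtype.ext (rem_ins _ _ le_rfl)
  right_inv B := by
    apply Subtype.ext
    have hB : B.1 ≠ .nil := by
      intro h; have := B.2; rw [h] at this; simp [BinTree.canopyFull] at this
    have hd := (cF_rem' B.1 B.2).2
    have hlt : ¬ (lbl B.1 - 1 < lbl (rem B.1)) := by simpa using hd
    have heq : lbl (rem B.1) = lbl B.1 - 1 := le_antisymm (by omega) (lbl_rem_ge B.1)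
    show ins (lbl (rem B.1)) (rem B.1) = B.1
    rw [heq]
    exact ins_rem B.1 hB

lemma lbl_eF (v : List Bool) (B : TreeS v) : lbl ((eF v B).1) = lbl B.1 + 1 :=
  lbl_ins _ _ le_rfl

def eTfun (v : List Bool) (p : Σ B : TreeS v, Fin (lbl B.1)) : TreeS (true :: v) :=
  ⟨ins p.2.1 p.1.1, by
    rw [cF_ins _ _ (le_of_lt p.2.2), p.1.2]
    simp [p.2.2]⟩

lemma eTfun_bij (v : List Bool) : Function.Bijective (eTfun v) := by
  constructor
  · rintro ⟨⟨B, hB⟩, ⟨d, hd⟩⟩ ⟨⟨C, hC⟩, ⟨e, he⟩⟩ h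
    have h' : ins d B = ins e C := congrArg Subtype.val h
    have hBC : B = C := by
      have := congrArg rem h'
      rwa [rem_ins _ _ (le_of_lt hd), rem_ins _ _ (le_of_lt he)] at this
    subst hBC
    have hde : d = e := by
      have := congrArg lbl h'
      rw [lbl_ins _ _ (le_of_lt hd), lbl_ins _ _ (le_of_lt he)] at this
      omega
    subst hde
    rfl
  · rintro ⟨B, hB⟩
    have hBn : B ≠ .nil := by intro h; rw [h] at hB; simp [BinTree.canopyFull] at hB
    obtain ⟨h1, h2⟩ := cF_rem' B hB
    have hd : lbl B - 1 < lbl (rem B) := by simpa using h2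
    refine ⟨⟨⟨rem B, h1⟩, ⟨lbl B - 1, hd⟩⟩, Subtype.ext ?_⟩
    exact ins_rem B hBn

/-- north-step-case equivalence -/
noncomputable def eT (v : List Bool) : (Σ B : TreeS v, Fin (lbl B.1)) ≃ TreeS (true :: v) :=
  Equiv.ofBijective _ (eTfun_bij v)

lemma lbl_eT (v : List Bool) (p : Σ B : TreeS v, Fin (lbl B.1)) :
    lbl ((eT v p).1) = p.2.1 + 1 := lbl_ins _ _ (le_of_lt p.2.2)

end CTproof

namespace CTproof

/-- validity of a column-filling `r` w.r.t. column heights `c` -/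
def Valid : List ℕ → List ℕ → Prop
  | [], [] => True
  | c :: cs, x :: rs => 1 ≤ x ∧ x ≤ c ∧ (∀ y ∈ rs, y ≤ x ∨ c < y) ∧ Valid cs rs
  | _, _ => False

/-- heights list of a word (the border path `true :: u`) -/
def C (u : List Bool) : List ℕ := eastHeightsAux 1 u

def Model (u : List Bool) : Type := {r : List ℕ // Valid (C u) r}

def stat (r : List ℕ) : ℕ := r.count 1

lemma count_cons' (x : ℕ) (xs : List ℕ) :
    (x :: xs).count 1 = xs.count 1 + (if x = 1 then 1 else 0) := by
  rw [List.count_cons]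
  by_cases h : x = 1 <;> simp [h]

lemma eastHeightsAux_succ (v : List Bool) (h : ℕ) :
    eastHeightsAux (h + 1) v = (eastHeightsAux h v).map (· + 1) := by
  induction v generalizing h with
  | nil => simp [eastHeightsAux]
  | cons b w ih =>
    cases b with
    | true => simp only [eastHeightsAux]; exact ih (h + 1)
    | false => simp only [eastHeightsAux, List.map_cons]; rw [ih h]

lemma C_false (w : List Bool) : C (false :: w) = 1 :: C w := rfl

lemma C_true (w : List Bool) : C (true :: w) = (C w).map (· + 1) := by
  show eastHeightsAux 2 w = _
  exact eastHeightsAux_succ w 1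

lemma mem_eastHeightsAux {v : List Bool} {h y : ℕ} (hy : y ∈ eastHeightsAux h v) : h ≤ y := by
  induction v generalizing h with
  | nil => simp [eastHeightsAux] at hy
  | cons b w ih =>
    cases b with
    | true => exact le_trans (Nat.le_succ h) (ih hy)
    | false =>
      simp only [eastHeightsAux, List.mem_cons] at hy
      rcases hy with rfl | hy
      · exact le_rfl
      · exact ih hy

lemma C_pos {u : List Bool} {y : ℕ} (hy : y ∈ C u) : 1 ≤ y := mem_eastHeightsAux hy

def phi (x : ℕ) : ℕ := max (x - 1) 1

/-- re-insert a bottom row: entries `x` become `x+1` except the last `t` ones become 1 -/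
def psi : List ℕ → ℕ → List ℕ
  | [], _ => []
  | x :: xs, t => if x = 1 ∧ xs.count 1 < t then 1 :: psi xs t else (x + 1) :: psi xs t

lemma valid_entries {cs rs : List ℕ} (h : Valid cs rs) : ∀ y ∈ rs, 1 ≤ y := by
  induction rs generalizing cs with
  | nil => simp
  | cons x xs ih =>
    cases cs with
    | nil => exact absurd h (by simp [Valid])
    | cons c cs' =>
      obtain ⟨h1, _, _, h4⟩ := h
      intro y hy
      rcases List.mem_cons.mp hy with rfl | hy
      · exact h1
      · exact ih h4 y hy

/-- false-case model iff -/
lemma valid_one_cons {cs : List ℕ} {r : List ℕ} :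
    Valid (1 :: cs) r ↔ ∃ rs, r = 1 :: rs ∧ Valid cs rs := by
  constructor
  · intro h
    cases r with
    | nil => exact absurd h (by simp [Valid])
    | cons x rs =>
      obtain ⟨h1, h2, _, h4⟩ := h
      have hx : x = 1 := le_antisymm h2 h1
      subst hx
      exact ⟨rs, rfl, h4⟩
  · rintro ⟨rs, rfl, h⟩
    exact ⟨le_rfl, le_rfl, fun y _ => le_or_gt y 1, h⟩

/-- (A): deleting the bottom row preserves validity -/
lemma valid_map_phi {cs rs : List ℕ} (hc : ∀ c ∈ cs, 1 ≤ c)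
    (h : Valid (cs.map (· + 1)) rs) : Valid cs (rs.map phi) := by
  induction cs generalizing rs with
  | nil => cases rs with
    | nil => trivial
    | cons x xs => exact absurd h (by simp [Valid])
  | cons c cs' ih =>
    cases rs with
    | nil => exact absurd h (by simp [Valid])
    | cons x xs =>
      simp only [List.map_cons] at h
      obtain ⟨h1, h2, h3, h4⟩ := h
      have hc1 : 1 ≤ c := hc c (List.mem_cons_self)
      rw [List.map_cons]
      refine ⟨by unfold phi; omega, by unfold phi; omega, ?_,
        ih (fun c hm => hc c (List.mem_cons_of_mem _ hm)) h4⟩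
      intro y hy
      obtain ⟨z, hz, rfl⟩ := List.mem_map.mp hy
      rcases h3 z hz with hle | hgt
      · exact Or.inl (by unfold phi; omega)
      · exact Or.inr (by unfold phi; omega)

lemma count_one_le_map_phi (rs : List ℕ) : rs.count 1 ≤ (rs.map phi).count 1 := by
  induction rs with
  | nil => simp
  | cons x xs ih =>
    rw [List.map_cons, count_cons', count_cons']
    by_cases hx : x = 1
    · have hpx : phi x = 1 := by subst hx; rfl
      rw [if_pos hx, if_pos hpx]; omega
    · rw [if_neg hx]; split <;> omega

lemma count_one_psi (rs : List ℕ) (t : ℕ) (hy : ∀ y ∈ rs, 1 ≤ y) :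
    (psi rs t).count 1 = min t (rs.count 1) := by
  induction rs with
  | nil => simp [psi]
  | cons x xs ih' =>
    have hx1 := hy x (List.mem_cons_self)
    have ih := ih' (fun y h => hy y (List.mem_cons_of_mem _ h))
    by_cases hm : x = 1 ∧ xs.count 1 < t
    · rw [psi, if_pos hm, count_cons', count_cons', ih, if_pos rfl, if_pos hm.1]
      obtain ⟨_, hlt⟩ := hm
      omega
    · rw [psi, if_neg hm, count_cons', count_cons', ih, if_neg (by omega)]
      by_cases hx1 : x = 1
      · rw [if_pos hx1]
        push_neg at hm
        have := hm hx1
        omega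
      · rw [if_neg hx1]
        omega

lemma mem_psi {rs : List ℕ} {t y : ℕ} (hy : y ∈ psi rs t) :
    y = 1 ∨ ∃ z ∈ rs, y = z + 1 := by
  induction rs generalizing t with
  | nil => simp [psi] at hy
  | cons x xs ih =>
    by_cases hm : x = 1 ∧ xs.count 1 < t
    · rw [psi, if_pos hm] at hy
      rcases List.mem_cons.mp hy with rfl | hy
      · exact Or.inl rfl
      · rcases ih hy with h | ⟨z, hz, rfl⟩
        · exact Or.inl h
        · exact Or.inr ⟨z, List.mem_cons_of_mem _ hz, rfl⟩
    · rw [psi, if_neg hm] at hy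
      rcases List.mem_cons.mp hy with rfl | hy
      · exact Or.inr ⟨x, List.mem_cons_self, rfl⟩
      · rcases ih hy with h | ⟨z, hz, rfl⟩
        · exact Or.inl h
        · exact Or.inr ⟨z, List.mem_cons_of_mem _ hz, rfl⟩

/-- when `t` exceeds the number of ones, every 1 is moved -/
lemma mem_psi_big {rs : List ℕ} {t y : ℕ} (hbig : rs.count 1 ≤ t)
    (hy : y ∈ psi rs t) : y = 1 ∨ ∃ z ∈ rs, y = z + 1 ∧ z ≠ 1 := by
  induction rs generalizing t with
  | nil => simp [psi] at hy
  | cons x xs ih =>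
    rw [count_cons'] at hbig
    by_cases hx1 : x = 1
    · rw [if_pos hx1] at hbig
      have hc : xs.count 1 < t := by omega
      rw [psi, if_pos ⟨hx1, hc⟩] at hy
      rcases List.mem_cons.mp hy with rfl | hy
      · exact Or.inl rfl
      · rcases ih (by omega) hy with h | ⟨z, hz, h1, h2⟩
        · exact Or.inl h
        · exact Or.inr ⟨z, List.mem_cons_of_mem _ hz, h1, h2⟩
    · rw [if_neg hx1] at hbig
      rw [psi, if_neg (by tauto)] at hy
      rcases List.mem_cons.mp hy with rfl | hy
      · exact Or.inr ⟨x, List.mem_cons_self, rfl, hx1⟩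
      · rcases ih (by omega) hy with h | ⟨z, hz, h1, h2⟩
        · exact Or.inl h
        · exact Or.inr ⟨z, List.mem_cons_of_mem _ hz, h1, h2⟩

/-- (C): validity of the re-inserted filling -/
lemma valid_psi {cs rs : List ℕ} (hc : ∀ c ∈ cs, 1 ≤ c) (h : Valid cs rs) (t : ℕ) :
    Valid (cs.map (· + 1)) (psi rs t) := by
  induction cs generalizing rs t with
  | nil => cases rs with
    | nil => trivial
    | cons x xs => exact absurd h (by simp [Valid])
  | cons c cs' ih =>
    cases rs with
    | nil => exact absurd h (by simp [Valid])
    | cons x xs =>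
      obtain ⟨h1, h2, h3, h4⟩ := h
      have hc1 : 1 ≤ c := hc c (List.mem_cons_self)
      have hc' : ∀ c ∈ cs', 1 ≤ c := fun c hm => hc c (List.mem_cons_of_mem _ hm)
      simp only [List.map_cons]
      by_cases hm : x = 1 ∧ xs.count 1 < t
      · rw [psi, if_pos hm]
        refine ⟨le_rfl, by omega, ?_, ih hc' h4 t⟩
        intro y hy
        rcases mem_psi_big (by omega) hy with rfl | ⟨z, hz, rfl, hz1⟩
        · exact Or.inl le_rfl
        · rcases h3 z hz with hle | hgt
          · have hz1' := valid_entries h4 z hz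
            obtain ⟨rfl, _⟩ := hm
            omega
          · exact Or.inr (by omega)
      · rw [psi, if_neg hm]
        refine ⟨by omega, by omega, ?_, ih hc' h4 t⟩
        intro y hy
        rcases mem_psi hy with rfl | ⟨z, hz, rfl⟩
        · exact Or.inl (by omega)
        · rcases h3 z hz with hle | hgt
          · exact Or.inl (by omega)
          · exact Or.inr (by omega)

/-- (E): left inverse -/
lemma map_phi_psi (rs : List ℕ) (t : ℕ) (hy : ∀ y ∈ rs, 1 ≤ y) :
    (psi rs t).map phi = rs := by
  induction rs with
  | nil => simp [psi]
  | cons x xs ih =>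
    have hx := hy x (List.mem_cons_self)
    have ih' := ih (fun y h => hy y (List.mem_cons_of_mem _ h))
    by_cases hm : x = 1 ∧ xs.count 1 < t
    · rw [psi, if_pos hm, List.map_cons, ih']
      obtain ⟨rfl, _⟩ := hm
      rfl
    · rw [psi, if_neg hm, List.map_cons, ih']
      congr 1
      unfold phi
      omega

lemma count_map_phi_of_no_two (xs : List ℕ) (hxs : ∀ y ∈ xs, 1 ≤ y ∧ y ≠ 2) :
    (xs.map phi).count 1 = xs.count 1 := by
  induction xs with
  | nil => simp
  | cons z zs ihz =>
    obtain ⟨hz1, hz2⟩ := hxs z (List.mem_cons_self)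
    have := ihz (fun y h => hxs y (List.mem_cons_of_mem _ h))
    rw [List.map_cons, count_cons', count_cons', this]
    by_cases hz : z = 1
    · subst hz
      rfl
    · have hp : phi z ≠ 1 := by unfold phi; omega
      rw [if_neg hz, if_neg hp]

/-- (F1): ψ with sufficient budget inverts φ on lists without entry 2 -/
lemma psi_map_phi_big (rs : List ℕ) (t : ℕ) (hy : ∀ y ∈ rs, 1 ≤ y ∧ y ≠ 2)
    (ht : rs.count 1 ≤ t) : psi (rs.map phi) t = rs := by
  induction rs generalizing t with
  | nil => simp [psi]
  | cons x xs ih =>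
    obtain ⟨hx1, hx2⟩ := hy x (List.mem_cons_self)
    have hy' : ∀ y ∈ xs, 1 ≤ y ∧ y ≠ 2 := fun y h => hy y (List.mem_cons_of_mem _ h)
    have hcount := count_map_phi_of_no_two xs hy'
    rw [count_cons'] at ht
    by_cases hx : x = 1
    · subst hx
      have hcx : xs.count 1 < t := by rw [if_pos rfl] at ht; omega
      rw [List.map_cons]
      show psi ((1:ℕ) :: _) t = _
      rw [psi, if_pos (by rw [hcount]; exact ⟨rfl, hcx⟩)]
      rw [ih t hy' (by omega)]
    · have hcx : xs.count 1 ≤ t := by rw [if_neg hx] at ht; omega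
      rw [List.map_cons, psi]
      have hphi : phi x = x - 1 := by unfold phi; omega
      rw [if_neg (by rw [hphi]; intro hh; omega)]
      rw [ih t hy' hcx, hphi]
      congr 1
      omega

/-- (F): right inverse -/
lemma psi_map_phi {cs rs : List ℕ} (hc : ∀ c ∈ cs, 1 ≤ c)
    (h : Valid (cs.map (· + 1)) rs) : psi (rs.map phi) (rs.count 1) = rs := by
  induction cs generalizing rs with
  | nil => cases rs with
    | nil => simp [psi]
    | cons x xs => exact absurd h (by simp [Valid])
  | cons c cs' ih =>
    cases rs with
    | nil => simp [psi]
    | cons x xs =>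
      simp only [List.map_cons] at h
      obtain ⟨h1, h2, h3, h4⟩ := h
      have hc1 : 1 ≤ c := hc c (List.mem_cons_self)
      have hc' : ∀ c ∈ cs', 1 ≤ c := fun c hm => hc c (List.mem_cons_of_mem _ hm)
      by_cases hx : x = 1
      · subst hx
        have hxs : ∀ y ∈ xs, 1 ≤ y ∧ y ≠ 2 := by
          intro y hyy
          refine ⟨valid_entries h4 y hyy, ?_⟩
          rcases h3 y hyy with hle | hgt <;> omega
        have hcount := count_map_phi_of_no_two xs hxs
        rw [List.map_cons]
        show psi ((1:ℕ) :: _) _ = _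
        rw [count_cons', if_pos rfl, psi, if_pos (by rw [hcount]; exact ⟨rfl, by omega⟩)]
        rw [psi_map_phi_big xs _ hxs (by omega)]
      · rw [List.map_cons, count_cons', if_neg hx, Nat.add_zero, psi]
        have hphi : phi x = x - 1 := by unfold phi; omega
        rw [if_neg (by
          rw [hphi]
          rintro ⟨hh1, hh2⟩
          have hge := count_one_le_map_phi xs
          omega)]
        rw [ih hc' h4, hphi]
        congr 1
        omega

end CTproof

namespace CTproof

lemma valid_nil_right {r : List ℕ} (h : Valid [] r) : r = [] := by
  cases r with
  | nil => rfl
  | cons x xs => exact absurd h (by simp [Valid])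

lemma cF_singleton {B : BinTree} (h : B.canopyFull = [false]) :
    B = .node .nil .nil := by
  cases B with
  | nil => simp [BinTree.canopyFull] at h
  | node l r =>
    have hlen := congrArg List.length h
    simp [BinTree.canopyFull] at hlen
    have hl : l.canopyFull = [] := List.eq_nil_of_length_eq_zero (by omega)
    have hr : r.canopyFull = [] := List.eq_nil_of_length_eq_zero (by omega)
    have hl' : l = .nil := cF_eq_nil.mp hl
    have hr' : r = .nil := cF_eq_nil.mp hr
    rw [hl', hr']

def mFf (w : List Bool) (r : Model w) : Model (false :: w) :=
  ⟨1 :: r.1, by rw [C_false, valid_one_cons]; exact ⟨r.1, rfl, r.2⟩⟩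

lemma mFf_bij (w : List Bool) : Function.Bijective (mFf w) := by
  constructor
  · rintro ⟨r, hr⟩ ⟨s, hs⟩ h
    have := congrArg Subtype.val h
    simp only [mFf, List.cons.injEq] at this
    exact Subtype.ext this.2
  · rintro ⟨r, hr⟩
    rw [C_false, valid_one_cons] at hr
    obtain ⟨rs, rfl, hv⟩ := hr
    exact ⟨⟨rs, hv⟩, Subtype.ext rfl⟩

noncomputable def mF (w : List Bool) : Model w ≃ Model (false :: w) :=
  Equiv.ofBijective _ (mFf_bij w)

def mTf (w : List Bool) (p : Σ r : Model w, Fin (stat r.1 + 1)) : Model (true :: w) :=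
  ⟨psi p.1.1 p.2.1, by
    rw [C_true]
    exact valid_psi (fun c hc => C_pos hc) p.1.2 p.2.1⟩

lemma mTf_bij (w : List Bool) : Function.Bijective (mTf w) := by
  constructor
  · rintro ⟨⟨r, hr⟩, ⟨t, ht⟩⟩ ⟨⟨s, hs⟩, ⟨t', ht'⟩⟩ h
    have h' : psi r t = psi s t' := congrArg Subtype.val h
    have hre := valid_entries hr
    have hse := valid_entries hs
    have hrs : r = s := by
      have := congrArg (List.map phi) h'
      rwa [map_phi_psi _ _ hre, map_phi_psi _ _ hse] at this
    subst hrs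
    have htt : t = t' := by
      have := congrArg (List.count 1) h'
      rw [count_one_psi _ _ hre, count_one_psi _ _ hre] at this
      simp only [stat] at ht ht'
      omega
    subst htt
    rfl
  · rintro ⟨r, hr⟩
    rw [C_true] at hr
    have hcp : ∀ c ∈ C w, 1 ≤ c := fun c hc => C_pos hc
    have h1 : Valid (C w) (r.map phi) := valid_map_phi hcp hr
    have h2 : r.count 1 ≤ (r.map phi).count 1 := count_one_le_map_phi r
    refine ⟨⟨⟨r.map phi, h1⟩, ⟨r.count 1, by simp only [stat]; omega⟩⟩, ?_⟩
    exact Subtype.ext (psi_map_phi hcp hr)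

noncomputable def mT (w : List Bool) : (Σ r : Model w, Fin (stat r.1 + 1)) ≃ Model (true :: w) :=
  Equiv.ofBijective _ (mTf_bij w)

theorem model_tree (u : List Bool) :
    ∃ e : Model u ≃ TreeS (u ++ [false]), ∀ x, stat x.1 + 1 = lbl (e x).1 := by
  induction u with
  | nil =>
    refine ⟨⟨fun _ => ⟨.node .nil .nil, by simp [BinTree.canopyFull]⟩,
      fun _ => ⟨[], by constructor⟩,
      fun r => Subtype.ext (valid_nil_right r.2).symm,
      fun B => Subtype.ext (cF_singleton B.2).symm⟩, ?_⟩
    rintro ⟨r, hr⟩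
    have : r = [] := valid_nil_right hr
    subst this
    rfl
  | cons b w ih =>
    obtain ⟨e, he⟩ := ih
    cases b with
    | false =>
      refine ⟨((mF w).symm.trans e).trans (eF (w ++ [false])), ?_⟩
      intro x
      set y := (mF w).symm x with hy
      have hxy : mFf w y = x := (mF w).apply_symm_apply x
      have hx1 : x.1 = 1 :: y.1 := by rw [← hxy]; rfl
      have hstat : stat x.1 = stat y.1 + 1 := by
        rw [hx1, stat, count_cons', if_pos rfl]; rfl
      have := he y
      calc stat x.1 + 1 = (stat y.1 + 1) + 1 := by rw [hstat]
        _ = lbl (e y).1 + 1 := by rw [this]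
        _ = lbl ((eF (w ++ [false])) (e y)).1 := (lbl_eF _ _).symm
        _ = _ := rfl
    | true =>
      let eSf : (Σ r : Model w, Fin (stat r.1 + 1)) → (Σ B : TreeS (w ++ [false]), Fin (lbl B.1)) :=
        fun p => ⟨e p.1, ⟨p.2.1, lt_of_lt_of_le p.2.2 (he p.1).le⟩⟩
      have eS_inj : Function.Injective eSf := by
        rintro ⟨a, b⟩ ⟨a', b'⟩ h
        have h1 : e a = e a' := congrArg Sigma.fst h
        have h2 : a = a' := e.injective h1
        subst h2
        have h3 : b.1 = b'.1 :=
          congrArg (fun q : (Σ B : TreeS (w ++ [false]), Fin (lbl B.1)) => q.2.1) h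
        have h4 : b = b' := Fin.ext h3
        rw [h4]
      have eS_surj : Function.Surjective eSf := by
        rintro ⟨B, d⟩
        have h4 := e.apply_symm_apply B
        refine ⟨⟨e.symm B, ⟨d.1, ?_⟩⟩, ?_⟩
        · rw [he (e.symm B), h4]
          exact d.2
        · refine Sigma.ext h4 ?_
          refine (Fin.heq_ext_iff (congrArg (fun t : TreeS (w ++ [false]) => lbl t.1) h4)).mpr rfl
      let eS : (Σ r : Model w, Fin (stat r.1 + 1)) ≃ (Σ B : TreeS (w ++ [false]), Fin (lbl B.1)) :=
        Equiv.ofBijective eSf ⟨eS_inj, eS_surj⟩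
      refine ⟨((mT w).symm.trans eS).trans (eT (w ++ [false])), ?_⟩
      have key : ∀ p : (Σ r : Model w, Fin (stat r.1 + 1)),
          stat (mTf w p).1 + 1 = lbl ((eT (w ++ [false])) (eS p)).1 := by
        rintro ⟨a, b⟩
        have hstat : stat (mTf w ⟨a, b⟩).1 = b.1 := by
          show (psi a.1 b.1).count 1 = b.1
          rw [count_one_psi _ _ (valid_entries a.2)]
          have := b.2
          simp only [stat] at this
          omega
        rw [hstat]
        have heS : (eS ⟨a, b⟩).2.1 = b.1 := rfl
        rw [← heS]
        exact (lbl_eT (w ++ [false]) (eS ⟨a, b⟩)).symm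
      intro x
      have hxp : mTf w ((mT w).symm x) = x := (mT w).apply_symm_apply x
      calc stat x.1 + 1 = stat (mTf w ((mT w).symm x)).1 + 1 := by rw [hxp]
        _ = lbl ((eT (w ++ [false])) (eS ((mT w).symm x))).1 := key _
        _ = _ := rfl

end CTproof

namespace CTproof

def kOf (u : List Bool) : ℕ := u.count true + 1
def mOf (u : List Bool) : ℕ := u.count false

lemma count_bool (w : List Bool) : w.count true + w.count false = w.length := by
  induction w with
  | nil => rfl
  | cons b v ih => cases b <;> simp [List.count_cons] <;> omega

def lamOf : List Bool → ℕ → ℕ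
  | [], _ => 0
  | false :: w, 0 => lamOf w 0 + 1
  | false :: w, i + 1 => lamOf w (i + 1)
  | true :: w, 0 => lamOf w 0
  | true :: w, i + 1 => lamOf w i

lemma lamOf_zero (u : List Bool) : lamOf u 0 = mOf u := by
  induction u with
  | nil => rfl
  | cons b w ih => cases b <;> simp [lamOf, mOf, List.count_cons] at * <;> omega

lemma lamOf_anti (u : List Bool) (i : ℕ) : lamOf u (i + 1) ≤ lamOf u i := by
  induction u generalizing i with
  | nil => exact le_rfl
  | cons b w ih =>
    cases b with
    | false =>
      cases i with
      | zero => have := ih 0; simp only [lamOf]; omega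
      | succ i => exact ih (i + 1)
    | true =>
      cases i with
      | zero => exact le_rfl
      | succ i => exact ih i

lemma lamOf_anti_le (u : List Bool) {a b : ℕ} (h : a ≤ b) : lamOf u b ≤ lamOf u a := by
  obtain ⟨d, rfl⟩ := Nat.exists_eq_add_of_le h
  clear h
  induction d with
  | zero => exact le_rfl
  | succ d ih =>
    have h1 : a + (d + 1) = (a + d) + 1 := by omega
    rw [h1]
    exact le_trans (lamOf_anti u (a + d)) ih

lemma lamOf_eq_zero (u : List Bool) (i : ℕ) (hi : kOf u ≤ i) : lamOf u i = 0 := by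
  induction u generalizing i with
  | nil => rfl
  | cons b w ih =>
    cases b with
    | false =>
      obtain ⟨i', rfl⟩ : ∃ i', i = i' + 1 := ⟨i - 1, by simp [kOf] at hi; omega⟩
      show lamOf w (i' + 1) = 0
      exact ih _ (by simp [kOf, List.count_cons] at hi ⊢; omega)
    | true =>
      obtain ⟨i', rfl⟩ : ∃ i', i = i' + 1 := ⟨i - 1, by simp [kOf] at hi; omega⟩
      show lamOf w i' = 0
      exact ih _ (by simp [kOf, List.count_cons] at hi ⊢; omega)

lemma lamOf_le (u : List Bool) (i : ℕ) : lamOf u i ≤ mOf u := by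
  rw [← lamOf_zero]
  exact lamOf_anti_le u (Nat.zero_le i)

lemma len_eastHeightsAux (v : List Bool) (h : ℕ) :
    (eastHeightsAux h v).length = v.count false := by
  induction v generalizing h with
  | nil => rfl
  | cons b w ih => cases b <;> simp [eastHeightsAux, List.count_cons, ih]

lemma len_C (u : List Bool) : (C u).length = mOf u := len_eastHeightsAux u 1

lemma eastHeightsAux_le {v : List Bool} {h y : ℕ} (hy : y ∈ eastHeightsAux h v) :
    y ≤ h + v.count true := by
  induction v generalizing h with
  | nil => simp [eastHeightsAux] at hy
  | cons b w ih =>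
    cases b with
    | true =>
      have := ih hy
      simp [List.count_cons] at *
      omega
    | false =>
      simp only [eastHeightsAux, List.mem_cons] at hy
      rcases hy with rfl | hy
      · simp [List.count_cons]
        try omega
      · have := ih hy
        simp [List.count_cons] at *
        try omega

lemma C_le_kOf {u : List Bool} {y : ℕ} (hy : y ∈ C u) : y ≤ kOf u := by
  have := eastHeightsAux_le hy
  simp [kOf] at *
  omega

/-- the key shape correspondence: a cell `(i, j)` is in the diagram iff `i < c_j` -/
lemma key_iff (u : List Bool) (i j : ℕ) (hj : j < (C u).length) :
    mOf u - lamOf u i ≤ j ↔ i < (C u)[j] := by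
  induction u generalizing i j with
  | nil => simp [C, eastHeightsAux] at hj
  | cons b w ih =>
    cases b with
    | false =>
      have hm : mOf (false :: w) = mOf w + 1 := by simp [mOf, List.count_cons]
      cases j with
      | zero =>
        have hc : (C (false :: w))[0]'hj = 1 := rfl
        rw [hc]
        cases i with
        | zero =>
          have h1 : lamOf (false :: w) 0 = mOf (false :: w) := lamOf_zero _
          constructor
          · intro _; omega
          · intro _; omega
        | succ i =>
          have h2 : lamOf (false :: w) (i + 1) = lamOf w (i + 1) := rfl
          have h3 := lamOf_le w (i + 1)
          rw [h2, hm]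
          constructor
          · intro hh; omega
          · intro hh; omega
      | succ j =>
        have hj' : j < (C w).length := by
          have := len_C (false :: w)
          have := len_C w
          omega
        have hc : (C (false :: w))[j + 1]'hj = (C w)[j]'hj' := rfl
        rw [hc]
        cases i with
        | zero =>
          have h1 : lamOf (false :: w) 0 = mOf (false :: w) := lamOf_zero _
          have h4 : 1 ≤ (C w)[j]'hj' := C_pos (List.getElem_mem hj')
          constructor
          · intro _; omega
          · intro _; omega
        | succ i =>
          have h2 : lamOf (false :: w) (i + 1) = lamOf w (i + 1) := rfl
          have h3 := lamOf_le w (i + 1)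
          have h5 := ih (i + 1) j hj'
          rw [h2, hm]
          omega
    | true =>
      have hm : mOf (true :: w) = mOf w := by simp [mOf, List.count_cons]
      have hj' : j < (C w).length := by
        have := len_C (true :: w)
        have := len_C w
        omega
      have hj2 : j < ((C w).map (· + 1)).length := by simpa using hj'
      have hc : (C (true :: w))[j]'hj = ((C w).map (· + 1))[j]'hj2 := by
        congr 1
        exact C_true w
      rw [hc, List.getElem_map]
      cases i with
      | zero =>
        have h1 : lamOf (true :: w) 0 = lamOf w 0 := rfl
        rw [h1, hm, lamOf_zero]
        omega
      | succ i =>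
        have h2 : lamOf (true :: w) (i + 1) = lamOf w i := rfl
        have h5 := ih i j hj'
        rw [h2, hm]
        omega

/-- the full border word of a shape -/
def Wn (k : ℕ) (lam : ℕ → ℕ) : List Bool :=
  (List.finRange k).flatMap (fun i => true :: List.replicate (lam i.1 - lam (i.1 + 1)) false)

lemma Wn_succ (k : ℕ) (lam : ℕ → ℕ) :
    Wn (k + 1) lam = (true :: List.replicate (lam 0 - lam 1) false) ++ Wn k (fun i => lam (i + 1)) := by
  unfold Wn
  rw [List.finRange_succ, List.flatMap_cons, List.flatMap_map]
  congr 1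

lemma Wn_zero (lam : ℕ → ℕ) : Wn 0 lam = [] := rfl

theorem Wn_lamOf (u : List Bool) : Wn (kOf u) (lamOf u) = true :: u := by
  induction u with
  | nil =>
    show Wn 1 (lamOf []) = [true]
    rw [show (1 : ℕ) = 0 + 1 from rfl, Wn_succ, Wn_zero]
    simp [lamOf]
  | cons b w ih =>
    have hk : 1 ≤ kOf w := by simp [kOf]
    obtain ⟨k', hk'⟩ : ∃ k', kOf w = k' + 1 := ⟨kOf w - 1, by omega⟩
    cases b with
    | false =>
      have hku : kOf (false :: w) = k' + 1 := by
        simp [kOf, List.count_cons] at hk' ⊢; omega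
      rw [hku, Wn_succ]
      rw [hk', Wn_succ] at ih
      have htail : Wn k' (fun i => lamOf (false :: w) (i + 1)) =
          Wn k' (fun i => lamOf w (i + 1)) := by
        congr 1
      have hhead : lamOf (false :: w) 0 - lamOf (false :: w) 1 =
          (lamOf w 0 - lamOf w 1) + 1 := by
        show (lamOf w 0 + 1) - lamOf w 1 = _
        have h01 : lamOf w 1 ≤ lamOf w 0 := lamOf_anti w 0
        omega
      rw [htail, hhead, List.replicate_succ]
      have hw : List.replicate (lamOf w 0 - lamOf w 1) false ++ Wn k' (fun i => lamOf w (i + 1)) = w := by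
        injection ih
      simp only [List.cons_append]
      rw [hw]
    | true =>
      have hku : kOf (true :: w) = kOf w + 1 := by
        simp [kOf, List.count_cons]
      rw [hku, Wn_succ]
      have hhead : lamOf (true :: w) 0 - lamOf (true :: w) 1 = 0 := by
        show lamOf w 0 - lamOf w 0 = 0
        omega
      have htail : Wn (kOf w) (fun i => lamOf (true :: w) (i + 1)) =
          Wn (kOf w) (lamOf w) := by
        congr 1
      rw [hhead, htail, ih]
      rfl

theorem Wn_inj (u : List Bool) : ∀ (k : ℕ) (lam : ℕ → ℕ), 0 < k →
    (∀ i, lam (i + 1) ≤ lam i) → (∀ i, k ≤ i → lam i = 0) →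
    Wn k lam = true :: u → k = kOf u ∧ ∀ i, lam i = lamOf u i := by
  induction u with
  | nil =>
    intro k lam hk hanti hzero hw
    obtain ⟨k', rfl⟩ : ∃ k', k = k' + 1 := ⟨k - 1, by omega⟩
    rw [Wn_succ] at hw
    simp only [List.cons_append, List.cons.injEq] at hw
    obtain ⟨-, hw⟩ := hw
    rw [List.append_eq_nil_iff] at hw
    obtain ⟨h1, h2⟩ := hw
    have hk0 : k' = 0 := by
      by_contra hne
      obtain ⟨k'', rfl⟩ : ∃ k'', k' = k'' + 1 := ⟨k' - 1, by omega⟩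
      rw [Wn_succ] at h2
      simp at h2
    subst hk0
    refine ⟨rfl, ?_⟩
    intro i
    cases i with
    | zero =>
      have hrep : lam 0 - lam 1 = 0 := by
        by_contra hne
        rw [List.replicate_eq_nil_iff] at h1
        exact hne h1
      have := hzero 1 le_rfl
      show lam 0 = 0
      omega
    | succ i => exact hzero (i + 1) (by omega)
  | cons b w ihw =>
    intro k lam hk hanti hzero hw
    obtain ⟨k', rfl⟩ : ∃ k', k = k' + 1 := ⟨k - 1, by omega⟩
    rw [Wn_succ] at hw
    simp only [List.cons_append, List.cons.injEq] at hw
    obtain ⟨-, hw⟩ := hw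
    cases b with
    | true =>
      have hd0 : lam 0 - lam 1 = 0 := by
        by_contra hne
        obtain ⟨d, hd⟩ : ∃ d, lam 0 - lam 1 = d + 1 := ⟨lam 0 - lam 1 - 1, by omega⟩
        rw [hd, List.replicate_succ] at hw
        simp at hw
      rw [hd0] at hw
      simp only [List.replicate_zero, List.nil_append] at hw
      have hk' : 0 < k' := by
        by_contra h0
        have : k' = 0 := by omega
        subst this
        rw [Wn_zero] at hw
        simp at hw
      obtain ⟨hkk, hll⟩ := ihw k' (fun i => lam (i + 1)) hk'
        (fun i => hanti (i + 1)) (fun i hi => hzero (i + 1) (by omega)) hw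
      constructor
      · simp [kOf, List.count_cons] at hkk ⊢; omega
      · intro i
        cases i with
        | zero =>
          show lam 0 = lamOf w 0
          have h1 : lam 1 ≤ lam 0 := hanti 0
          have h2 : lam 1 = lamOf w 0 := hll 0
          omega
        | succ i => exact hll i
    | false =>
      have hd0 : lam 0 - lam 1 ≠ 0 := by
        intro h0
        rw [h0] at hw
        simp only [List.replicate_zero, List.nil_append] at hw
        rcases Nat.eq_zero_or_pos k' with rfl | hk'
        · rw [Wn_zero] at hw; simp at hw
        · obtain ⟨k'', rfl⟩ : ∃ k'', k' = k'' + 1 := ⟨k' - 1, by omega⟩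
          rw [Wn_succ] at hw
          simp at hw
      obtain ⟨d, hd⟩ : ∃ d, lam 0 - lam 1 = d + 1 := ⟨lam 0 - lam 1 - 1, by omega⟩
      rw [hd, List.replicate_succ] at hw
      simp only [List.cons_append, List.cons.injEq] at hw
      obtain ⟨-, hw⟩ := hw
      set lam2 : ℕ → ℕ := fun i => if i = 0 then lam 0 - 1 else lam i with hlam2
      have hanti1 := hanti 0
      have hl01 : lam 0 = lam 1 + d + 1 := by omega
      have hw2 : Wn (k' + 1) lam2 = true :: w := by
        rw [Wn_succ]
        have h1 : lam2 0 - lam2 1 = d := by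
          simp only [hlam2]
          norm_num
          omega
        have h2 : Wn k' (fun i => lam2 (i + 1)) = Wn k' (fun i => lam (i + 1)) := by
          congr 1
        rw [h1, h2, ← hw]
        rfl
      obtain ⟨hkk, hll⟩ := ihw (k' + 1) lam2 (by omega)
        (by
          intro i
          cases i with
          | zero => simp only [hlam2]; norm_num; omega
          | succ i => simp only [hlam2]; norm_num; exact hanti (i + 1))
        (by
          intro i hi
          have : i ≠ 0 := by omega
          simp only [hlam2, if_neg this]
          exact hzero i hi)
        hw2
      constructor
      · simp [kOf, List.count_cons] at hkk ⊢; omega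
      · intro i
        cases i with
        | zero =>
          have h0 := hll 0
          simp only [hlam2, if_pos rfl] at h0
          show lam 0 = lamOf w 0 + 1
          omega
        | succ i =>
          have h0 := hll (i + 1)
          simp only [hlam2, if_neg (Nat.succ_ne_zero i)] at h0
          exact h0

end CTproof

namespace CTproof

/-! ### indexed characterization of `Valid` -/

lemma valid_length {cl r : List ℕ} (h : Valid cl r) : r.length = cl.length := by
  induction cl generalizing r with
  | nil => cases r with
    | nil => rfl
    | cons x xs => exact absurd h (by simp [Valid])
  | cons c0 cs ih =>
    cases r with
    | nil => exact absurd h (by simp [Valid])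
    | cons x rs =>
      obtain ⟨-, -, -, h4⟩ := h
      simp [ih h4]

lemma valid_getElem {cl r : List ℕ} (h : Valid cl r) (j : ℕ) (hj : j < r.length)
    (hj' : j < cl.length) : 1 ≤ r[j] ∧ r[j] ≤ cl[j] := by
  induction cl generalizing r j with
  | nil => simp at hj'
  | cons c0 cs ih =>
    cases r with
    | nil => exact absurd h (by simp [Valid])
    | cons x rs =>
      obtain ⟨h1, h2, h3, h4⟩ := h
      cases j with
      | zero => simpa using ⟨h1, h2⟩
      | succ j =>
        rw [List.getElem_cons_succ, List.getElem_cons_succ]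
        exact ih h4 j (by simpa using hj) (by simpa using hj')

lemma valid_pairwise {cl r : List ℕ} (h : Valid cl r) (j j' : ℕ) (hjj : j < j')
    (hj' : j' < r.length) (hjc : j < cl.length) :
    r[j'] ≤ r[j]'(by omega) ∨ cl[j] < r[j'] := by
  induction cl generalizing r j j' with
  | nil => simp at hjc
  | cons c0 cs ih =>
    cases r with
    | nil => exact absurd h (by simp [Valid])
    | cons x rs =>
      obtain ⟨h1, h2, h3, h4⟩ := h
      cases j with
      | zero =>
        obtain ⟨j'', rfl⟩ : ∃ j'', j' = j'' + 1 := ⟨j' - 1, by omega⟩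
        rw [List.getElem_cons_succ, List.getElem_cons_zero, List.getElem_cons_zero]
        exact h3 _ (List.getElem_mem (by simpa using hj'))
      | succ j =>
        obtain ⟨j'', rfl⟩ : ∃ j'', j' = j'' + 1 := ⟨j' - 1, by omega⟩
        rw [List.getElem_cons_succ, List.getElem_cons_succ, List.getElem_cons_succ]
        exact ih h4 j j'' (by omega) (by simpa using hj') (by simpa using hjc)

lemma valid_of {cl r : List ℕ} (hlen : r.length = cl.length)
    (hb : ∀ (j : ℕ) (hj : j < r.length) (hj' : j < cl.length), 1 ≤ r[j] ∧ r[j] ≤ cl[j])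
    (hp : ∀ (j j' : ℕ), j < j' → ∀ (hj1 : j < r.length) (hj' : j' < r.length)
      (hjc : j < cl.length), r[j'] ≤ r[j] ∨ cl[j] < r[j']) : Valid cl r := by
  induction cl generalizing r with
  | nil =>
    cases r with
    | nil => trivial
    | cons x xs => simp at hlen
  | cons c0 cs ih =>
    cases r with
    | nil => simp at hlen
    | cons x rs =>
      have h0 := hb 0 (by simp) (by simp)
      simp only [List.getElem_cons_zero] at h0
      refine ⟨h0.1, h0.2, ?_, ?_⟩
      · intro y hy
        obtain ⟨⟨t, ht⟩, rfl⟩ := List.mem_iff_get.mp hy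
        have := hp 0 (t + 1) (by omega) (by simp) (by simp; omega) (by simp)
        simpa using this
      · refine ih (by simpa using hlen) ?_ ?_
        · intro j hj hj'
          have := hb (j + 1) (by simpa using hj) (by simpa using hj')
          simpa using this
        · intro j j' hjj hj1 hj' hjc
          have := hp (j + 1) (j' + 1) (by omega) (by simpa using hj1)
            (by simpa using hj') (by simpa using hjc)
          simpa using this

/-! ### profile and shape recovery -/

def lamExt {n : ℕ} (T : CatalanTableau n) : ℕ → ℕ :=
  fun i => if h : i < T.k then T.lam ⟨i, h⟩ else 0

lemma profile_Wn {n : ℕ} (T : CatalanTableau n) :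
    Wn T.k (lamExt T) = true :: T.profile := by
  have h1 : (List.finRange T.k).flatMap (fun i =>
      true :: List.replicate (T.lam i - (if h : (i : ℕ) + 1 < T.k then T.lam ⟨(i : ℕ) + 1, h⟩ else 0)) false)
      = Wn T.k (lamExt T) := by
    unfold Wn
    congr 1
    funext i
    have e1 : lamExt T i.1 = T.lam i := by
      unfold lamExt
      rw [dif_pos i.2]
    have e2 : lamExt T (i.1 + 1) =
        (if h : (i : ℕ) + 1 < T.k then T.lam ⟨(i : ℕ) + 1, h⟩ else 0) := rfl
    rw [e1, e2]
  have hhead : ∃ v, Wn T.k (lamExt T) = true :: v := by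
    obtain ⟨k', hk'⟩ : ∃ k', T.k = k' + 1 := ⟨T.k - 1, by have := T.hk; omega⟩
    rw [hk', Wn_succ]
    exact ⟨_, rfl⟩
  obtain ⟨v, hv⟩ := hhead
  have : T.profile = v := by
    unfold CatalanTableau.profile
    rw [h1, hv]
    rfl
  rw [hv, this]

lemma lamExt_anti {n : ℕ} (T : CatalanTableau n) (i : ℕ) :
    lamExt T (i + 1) ≤ lamExt T i := by
  unfold lamExt
  by_cases h1 : i + 1 < T.k
  · rw [dif_pos h1, dif_pos (by omega)]
    exact T.lam_anti ⟨i, by omega⟩ ⟨i + 1, h1⟩ (by simp)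
  · rw [dif_neg h1]
    exact Nat.zero_le _

lemma lamExt_zero {n : ℕ} (T : CatalanTableau n) (i : ℕ) (hi : T.k ≤ i) :
    lamExt T i = 0 := dif_neg (by omega)

/-- shape recovery from the profile -/
lemma shape_recover {n : ℕ} (T : CatalanTableau n) {u : List Bool} (hp : T.profile = u) :
    T.k = kOf u ∧ T.m = mOf u ∧ ∀ i, lamExt T i = lamOf u i := by
  have hW : Wn T.k (lamExt T) = true :: u := by rw [profile_Wn, hp]
  obtain ⟨h1, h2⟩ := Wn_inj u T.k (lamExt T) T.hk (lamExt_anti T) (lamExt_zero T) hW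
  refine ⟨h1, ?_, h2⟩
  have h3 : lamExt T 0 = T.m := by
    unfold lamExt
    rw [dif_pos T.hk]
    exact T.lam_first
  rw [← h3, h2 0, lamOf_zero]

lemma lamExt_eq {n : ℕ} (T : CatalanTableau n) (i : ℕ) (h : i < T.k) :
    lamExt T i = T.lam ⟨i, h⟩ := dif_pos h

/-! ### the forward map -/

noncomputable def oneRow {n : ℕ} (T : CatalanTableau n) (j : Fin T.m) : Fin T.k :=
  Fintype.choose (fun i => T.f i j = true) (T.col_one j)

lemma oneRow_spec {n : ℕ} (T : CatalanTableau n) (j : Fin T.m) :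
    T.f (oneRow T j) j = true :=
  Fintype.choose_spec (fun i => T.f i j = true) (T.col_one j)

lemma oneRow_unique {n : ℕ} (T : CatalanTableau n) {i : Fin T.k} {j : Fin T.m}
    (h : T.f i j = true) : i = oneRow T j :=
  (T.col_one j).unique h (oneRow_spec T j)

noncomputable def rowList {n : ℕ} (T : CatalanTableau n) : List ℕ :=
  (List.finRange T.m).map (fun j => (oneRow T j).1 + 1)

lemma rowList_length {n : ℕ} (T : CatalanTableau n) : (rowList T).length = T.m := by
  simp [rowList]

lemma rowList_getElem {n : ℕ} (T : CatalanTableau n) (j : ℕ) (hj : j < T.m)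
    (hj' : j < (rowList T).length) :
    (rowList T)[j] = (oneRow T ⟨j, hj⟩).1 + 1 := by
  simp [rowList]

/-- a 1 lies inside the diagram -/
lemma one_inside {n : ℕ} (T : CatalanTableau n) {i : Fin T.k} {j : Fin T.m}
    (h : T.f i j = true) : T.m - T.lam i ≤ (j : ℕ) := by
  by_contra hc
  rw [T.f_outside i j (by omega)] at h
  exact Bool.false_ne_true h

lemma rowList_valid {u : List Bool} (T : CatalanTableau (u.length + 1))
    (hp : T.profile = u) : Valid (C u) (rowList T) := by
  obtain ⟨hk, hm, hlam⟩ := shape_recover T hp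
  have hlen : (rowList T).length = (C u).length := by
    rw [rowList_length, len_C, hm]
  have hCl : (C u).length = T.m := by rw [len_C, hm]
  -- key iff specialized
  have hkey : ∀ (i : Fin T.k) (j : ℕ) (hj : j < (C u).length),
      (T.m - T.lam i ≤ j ↔ (i : ℕ) < (C u)[j]) := by
    intro i j hj
    have := key_iff u i.1 j hj
    rw [← hm, ← hlam i.1, lamExt_eq T i.1 i.2] at this
    simpa using this
  refine valid_of hlen ?_ ?_
  · intro j hj hjc
    have hjm : j < T.m := by rw [rowList_length] at hj; exact hj
    rw [rowList_getElem T j hjm hj]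
    constructor
    · omega
    · have hin := one_inside T (oneRow_spec T ⟨j, hjm⟩)
      have := (hkey (oneRow T ⟨j, hjm⟩) j hjc).mp hin
      omega
  · intro j j' hjj hj1 hj' hjc
    have hjm : j < T.m := by rw [rowList_length] at hj1; exact hj1
    have hjm' : j' < T.m := by rw [rowList_length] at hj'; exact hj'
    rw [rowList_getElem T j hjm, rowList_getElem T j' hjm']
    by_contra hcon
    push_neg at hcon
    obtain ⟨hgt, hle⟩ := hcon
    set i' := oneRow T ⟨j', hjm'⟩ with hi'
    set i0 := oneRow T ⟨j, hjm⟩ with hi0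
    have hlt : (i0 : ℕ) < (i' : ℕ) := by omega
    have hcj : (i' : ℕ) < (C u)[j] := by omega
    have hin : T.m - T.lam i' ≤ j := (hkey i' j hjc).mpr hcj
    have hfz : T.f i' ⟨j, hjm⟩ = false := by
      cases hf : T.f i' ⟨j, hjm⟩ with
      | false => rfl
      | true =>
        have := oneRow_unique T hf
        rw [← hi0] at this
        rw [this] at hlt
        omega
    refine T.no_bad i' ⟨j, hjm⟩ hin hfz ⟨⟨i0, ?_, oneRow_spec T ⟨j, hjm⟩⟩,
      ⟨⟨j', hjm'⟩, by simpa using hjj, oneRow_spec T ⟨j', hjm'⟩⟩⟩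
    exact hlt

/-! ### the backward map -/

noncomputable def mkTab (u : List Bool) (r : List ℕ) (hr : Valid (C u) r) :
    CatalanTableau (u.length + 1) where
  k := kOf u
  m := mOf u
  hk := Nat.succ_pos _
  hkm := by
    have := count_bool u
    unfold kOf mOf
    omega
  lam := fun i => lamOf u i.1
  lam_le := fun i => lamOf_le u i.1
  lam_first := lamOf_zero u
  lam_anti := fun i j hij => lamOf_anti_le u hij
  f := fun i j => decide (r[(j : ℕ)]'(by rw [valid_length hr, len_C]; exact j.2) = (i : ℕ) + 1)
  f_outside := by
    intro i j hij
    have hij' : (j : ℕ) < mOf u - lamOf u i.1 := hij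
    simp only [decide_eq_false_iff_not]
    intro heq
    have hj' : (j : ℕ) < (C u).length := by rw [len_C]; exact j.2
    have hb := valid_getElem hr j.1 (by rw [valid_length hr]; exact hj') hj'
    rw [heq] at hb
    have := (key_iff u i.1 j.1 hj').mpr (by omega)
    omega
  col_one := by
    intro j
    have hj' : (j : ℕ) < (C u).length := by rw [len_C]; exact j.2
    have hjr : (j : ℕ) < r.length := by rw [valid_length hr]; exact hj'
    have hb := valid_getElem hr j.1 hjr hj'
    have hck : (C u)[(j : ℕ)] ≤ kOf u := C_le_kOf (List.getElem_mem hj')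
    refine ⟨⟨r[(j : ℕ)] - 1, by omega⟩, ?_, ?_⟩
    · simp only [decide_eq_true_eq]
      omega
    · intro i hi
      simp only [decide_eq_true_eq] at hi
      have hv : (i : ℕ) = r[(j : ℕ)]'hjr - 1 := by omega
      exact Fin.ext hv
  no_bad := by
    intro i j hin hfz ⟨⟨i', hi'lt, hi'⟩, ⟨j', hj'gt, hj'⟩⟩
    simp only [decide_eq_true_eq] at hi' hj'
    have hjc : (j : ℕ) < (C u).length := by rw [len_C]; exact j.2
    have hjr' : (j' : ℕ) < r.length := by rw [valid_length hr, len_C]; exact j'.2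
    have hpair := valid_pairwise hr j.1 j'.1 (by exact hj'gt) hjr' hjc
    rcases hpair with hle | hgt
    · rw [hj'] at hle
      have : r[(j : ℕ)]'(by omega) = (i' : ℕ) + 1 := hi'
      rw [this] at hle
      have : (i' : ℕ) < (i : ℕ) := hi'lt
      omega
    · rw [hj'] at hgt
      have := (key_iff u i.1 j.1 hjc).mp hin
      omega

lemma mkTab_profile (u : List Bool) (r : List ℕ) (hr : Valid (C u) r) :
    (mkTab u r hr).profile = u := by
  have h1 : Wn (kOf u) (lamExt (mkTab u r hr)) = true :: (mkTab u r hr).profile :=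
    profile_Wn (mkTab u r hr)
  have h2 : lamExt (mkTab u r hr) = lamOf u := by
    funext i
    show (dite (i < kOf u) (fun h => lamOf u i) (fun h => 0)) = lamOf u i
    by_cases h : i < kOf u
    · rw [dif_pos h]
    · rw [dif_neg h]
      exact (lamOf_eq_zero u i (by omega)).symm
  rw [h2, Wn_lamOf] at h1
  exact (List.cons_eq_cons.mp h1).2.symm

/-! ### the tableau–model equivalence -/

lemma tab_ext {n : ℕ} {T S : CatalanTableau n} (hk : T.k = S.k) (hm : T.m = S.m)
    (hlam : ∀ (i : ℕ) (h1 : i < T.k) (h2 : i < S.k), T.lam ⟨i, h1⟩ = S.lam ⟨i, h2⟩)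
    (hf : ∀ (i j : ℕ) (h1 : i < T.k) (h2 : i < S.k) (h3 : j < T.m) (h4 : j < S.m),
      T.f ⟨i, h1⟩ ⟨j, h3⟩ = S.f ⟨i, h2⟩ ⟨j, h4⟩) : T = S := by
  obtain ⟨k1, m1, p1, p2, lam1, p3, p4, p5, f1, p6, p7, p8⟩ := T
  obtain ⟨k2, m2, q1, q2, lam2, q3, q4, q5, f2, q6, q7, q8⟩ := S
  simp only at hk hm hlam hf
  subst hk
  subst hm
  have hl : lam1 = lam2 := by
    funext i
    have := hlam i.1 i.2 i.2
    simpa using this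
  subst hl
  have hff : f1 = f2 := by
    funext i j
    have := hf i.1 j.1 i.2 i.2 j.2 j.2
    simpa using this
  subst hff
  rfl

noncomputable def tabEquiv (u : List Bool) :
    {T : CatalanTableau (u.length + 1) // T.profile = u} ≃ Model u where
  toFun T := ⟨rowList T.1, rowList_valid T.1 T.2⟩
  invFun r := ⟨mkTab u r.1 r.2, mkTab_profile u r.1 r.2⟩
  left_inv := by
    rintro ⟨T, hp⟩
    obtain ⟨hk, hm, hlam⟩ := shape_recover T hp
    apply Subtype.ext
    show mkTab u (rowList T) (rowList_valid T hp) = T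
    apply tab_ext
    · show kOf u = T.k
      exact hk.symm
    · show mOf u = T.m
      exact hm.symm
    · intro i h1 h2
      show lamOf u i = T.lam ⟨i, h2⟩
      rw [← lamExt_eq T i h2, hlam i]
    · intro i j h1 h2 h3 h4
      have hjr : j < (rowList T).length := by rw [rowList_length]; exact h4
      show decide ((rowList T)[j]'(hjr) = i + 1) = T.f ⟨i, h2⟩ ⟨j, h4⟩
      rw [rowList_getElem T j h4 hjr]
      cases hfv : T.f ⟨i, h2⟩ ⟨j, h4⟩ with
      | true =>
        have := oneRow_unique T hfv
        simp only [decide_eq_true_eq]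
        rw [← this]
      | false =>
        simp only [decide_eq_false_iff_not]
        intro hcon
        have hval : ((oneRow T ⟨j, h4⟩ : Fin T.k) : ℕ) = i := by omega
        have hi : oneRow T ⟨j, h4⟩ = ⟨i, h2⟩ := Fin.ext hval
        have := oneRow_spec T ⟨j, h4⟩
        rw [hi, hfv] at this
        exact Bool.false_ne_true this
  right_inv := by
    rintro ⟨r, hr⟩
    apply Subtype.ext
    show rowList (mkTab u r hr) = r
    have hlen : (rowList (mkTab u r hr)).length = r.length := by
      rw [rowList_length]
      show mOf u = r.length
      rw [valid_length hr, len_C]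
    refine List.ext_getElem hlen ?_
    intro j h1 h2
    have hjm : j < mOf u := by rw [rowList_length] at h1; exact h1
    rw [rowList_getElem (mkTab u r hr) j hjm h1]
    have hspec := oneRow_spec (mkTab u r hr) ⟨j, hjm⟩
    have hspec' : r[j]'(by rw [valid_length hr, len_C]; exact hjm) =
        ((oneRow (mkTab u r hr) ⟨j, hjm⟩ : Fin (kOf u)) : ℕ) + 1 := of_decide_eq_true hspec
    have hb := valid_getElem hr j (by rw [valid_length hr, len_C]; exact hjm)
      (by rw [len_C]; exact hjm)
    omega

end CTproof

namespace CTproof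

lemma size_eq_zero {B : BinTree} : B.size = 0 ↔ B = .nil := by
  cases B <;> simp [BinTree.size]

lemma len_cF (B : BinTree) : B.canopyFull.length = B.size := by
  induction B with
  | nil => rfl
  | node l r ihl ihr =>
    simp [BinTree.canopyFull, BinTree.size, ihl, ihr]
    omega

lemma cF_ends (B : BinTree) (hB : B ≠ .nil) : ∃ v, B.canopyFull = v ++ [false] := by
  induction B with
  | nil => exact absurd rfl hB
  | node l r ihl ihr =>
    cases hr : r with
    | nil =>
      refine ⟨l.canopyFull, ?_⟩
      simp [BinTree.canopyFull, hr]
    | node a b =>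
      rw [← hr]
      obtain ⟨v, hv⟩ := ihr (by rw [hr]; simp)
      refine ⟨l.canopyFull ++ (decide (r ≠ BinTree.nil)) :: v, ?_⟩
      simp [BinTree.canopyFull, hv]

lemma canopy_size_iff (u : List Bool) (B : BinTree) :
    B.canopyFull = u ++ [false] ↔ (B.size = u.length + 1 ∧ B.canopy = u) := by
  constructor
  · intro h
    constructor
    · rw [← len_cF, h]
      simp
    · unfold BinTree.canopy
      rw [h, List.dropLast_concat]
  · rintro ⟨hs, hc⟩
    have hB : B ≠ .nil := by
      intro hn
      rw [hn] at hs
      simp [BinTree.size] at hs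
    obtain ⟨v, hv⟩ := cF_ends B hB
    have : B.canopy = v := by
      unfold BinTree.canopy
      rw [hv, List.dropLast_concat]
    rw [hv, this.symm.trans hc]

end CTproof


/-- For every integer `n ≥ 1` and every word `u` of length `n - 1`
over `{a, b}`, the number of Catalan tableaux of index `n` whose profile is `u`
equals the number of binary trees with `n` vertices whose canopy is `u`. -/
theorem card_catalanTableau_profile_eq_card_binTree_canopy
    (n : ℕ) (hn : 1 ≤ n) (u : List Bool) (hu : u.length = n - 1) :
    Nat.card {T : CatalanTableau n // T.profile = u} =
      Nat.card {B : BinTree // B.size = n ∧ B.canopy = u} := by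
  have hn' : n = u.length + 1 := by omega
  subst hn'
  obtain ⟨e, -⟩ := CTproof.model_tree u
  rw [Nat.card_congr (CTproof.tabEquiv u), Nat.card_congr e]
  exact Nat.card_congr (Equiv.subtypeEquivRight (CTproof.canopy_size_iff u))
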